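/- arXiv:2107.11464 — 2 statements merged into one kernel-verified Lean document; each statement's English description precedes it below -/
import Mathlib

section
/- If A is a four-index tensor with finite Hilbert-Schmidt norm, then the tensor T defined by contracting four copies of A in a 2×2 plaquette satisfies ‖T‖ ≤ ‖A‖⁴. -/
/-- Hilbert-Schmidt (Frobenius) norm of a tensor indexed by `ι`. -/
noncomputable def hsNorm {ι : Type*} (A : ι → ℝ) : ℝ :=
  Real.sqrt (∑' x, (A x) ^ 2)

/-- The 2×2 plaquette contraction of four copies of a four-index tensor `A`:
`T_{(i₁i₂)(j₁j₂)(k₁k₂)(l₁l₂) } = ∑_{a,b,c,d} A_{i₁j₁ad} A_{aj₂k₁c} A_{bck₂l₁} A_{i₂bdl₂}`. -/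
noncomputable def contract2x2 (A : ℕ × ℕ × ℕ × ℕ → ℝ) :
    ((ℕ × ℕ) × (ℕ × ℕ) × (ℕ × ℕ) × (ℕ × ℕ)) → ℝ := fun q =>
  ∑' w : ℕ × ℕ × ℕ × ℕ,
    A (q.1.1, q.2.1.1, w.1, w.2.2.2) * A (w.1, q.2.1.2, q.2.2.1.1, w.2.2.1) *
      A (w.2.1, w.2.2.1, q.2.2.1.2, q.2.2.2.1) * A (q.1.2, w.2.1, w.2.2.2, q.2.2.2.2)

section Aux

/-- Partial-sum Cauchy–Schwarz against full tsums. -/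
lemma cs_partial {ι : Type*} (f g : ι → ℝ)
    (hf : Summable fun i => f i ^ 2) (hg : Summable fun i => g i ^ 2) (s : Finset ι) :
    ∑ i ∈ s, f i * g i ≤ Real.sqrt (∑' i, f i ^ 2) * Real.sqrt (∑' i, g i ^ 2) := by
  refine (Real.sum_mul_le_sqrt_mul_sqrt s f g).trans ?_
  have h1 : ∑ i ∈ s, f i ^ 2 ≤ ∑' i, f i ^ 2 := Summable.sum_le_tsum s (fun i _ => sq_nonneg _) hf
  have h2 : ∑ i ∈ s, g i ^ 2 ≤ ∑' i, g i ^ 2 := Summable.sum_le_tsum s (fun i _ => sq_nonneg _) hg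
  exact mul_le_mul (Real.sqrt_le_sqrt h1) (Real.sqrt_le_sqrt h2) (Real.sqrt_nonneg _)
    (Real.sqrt_nonneg _)

/-- Factorization of a tsum of a product over a product type (nonneg case). -/
lemma tsum_prod_mul {α β : Type*} {f : α → ℝ} {g : β → ℝ}
    (hf : Summable f) (hg : Summable g) (hf0 : ∀ x, 0 ≤ f x) (hg0 : ∀ y, 0 ≤ g y) :
    ∑' p : α × β, f p.1 * g p.2 = (∑' x, f x) * ∑' y, g y := by
  rw [Summable.tsum_prod' (hf.mul_of_nonneg hg hf0 hg0) (fun a => hg.mul_left (f a))]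
  simp_rw [tsum_mul_left]
  rw [tsum_mul_right]

/-- Finite-sum Cauchy–Schwarz bound for the 2×2 plaquette contraction pattern. -/
lemma key4 (X Y Z W : ℕ → ℕ → ℝ)
    (hX0 : ∀ a d, 0 ≤ X a d) (hY0 : ∀ a c, 0 ≤ Y a c)
    (hZ0 : ∀ b c, 0 ≤ Z b c) (hW0 : ∀ b d, 0 ≤ W b d)
    (hX : Summable fun p : ℕ × ℕ => X p.1 p.2 ^ 2)
    (hY : Summable fun p : ℕ × ℕ => Y p.1 p.2 ^ 2)
    (hZ : Summable fun p : ℕ × ℕ => Z p.1 p.2 ^ 2)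
    (hW : Summable fun p : ℕ × ℕ => W p.1 p.2 ^ 2)
    (s : Finset (ℕ × ℕ × ℕ × ℕ)) :
    ∑ w ∈ s, X w.1 w.2.2.2 * Y w.1 w.2.2.1 * Z w.2.1 w.2.2.1 * W w.2.1 w.2.2.2 ≤
      Real.sqrt (∑' p : ℕ × ℕ, X p.1 p.2 ^ 2) * Real.sqrt (∑' p : ℕ × ℕ, Y p.1 p.2 ^ 2) *
        Real.sqrt (∑' p : ℕ × ℕ, Z p.1 p.2 ^ 2) * Real.sqrt (∑' p : ℕ × ℕ, W p.1 p.2 ^ 2) := by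
  classical
  set sa := s.image (fun w : ℕ × ℕ × ℕ × ℕ => w.1) with hsa
  set sb := s.image (fun w : ℕ × ℕ × ℕ × ℕ => w.2.1) with hsb
  set sc := s.image (fun w : ℕ × ℕ × ℕ × ℕ => w.2.2.1) with hsc
  set sd := s.image (fun w : ℕ × ℕ × ℕ × ℕ => w.2.2.2) with hsd
  have hsub : s ⊆ sa ×ˢ sb ×ˢ sc ×ˢ sd := by
    intro w hw
    simp only [Finset.mem_product, hsa, hsb, hsc, hsd, Finset.mem_image]
    exact ⟨⟨w, hw, rfl⟩, ⟨w, hw, rfl⟩, ⟨w, hw, rfl⟩, ⟨w, hw, rfl⟩⟩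
  have hterm0 : ∀ w : ℕ × ℕ × ℕ × ℕ,
      0 ≤ X w.1 w.2.2.2 * Y w.1 w.2.2.1 * Z w.2.1 w.2.2.1 * W w.2.1 w.2.2.2 := fun w =>
    mul_nonneg (mul_nonneg (mul_nonneg (hX0 _ _) (hY0 _ _)) (hZ0 _ _)) (hW0 _ _)
  have h1 : ∑ w ∈ s, X w.1 w.2.2.2 * Y w.1 w.2.2.1 * Z w.2.1 w.2.2.1 * W w.2.1 w.2.2.2 ≤
      ∑ w ∈ sa ×ˢ sb ×ˢ sc ×ˢ sd,
        X w.1 w.2.2.2 * Y w.1 w.2.2.1 * Z w.2.1 w.2.2.1 * W w.2.1 w.2.2.2 :=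
    Finset.sum_le_sum_of_subset_of_nonneg hsub fun w _ _ => hterm0 w
  set VX : ℕ → ℝ := fun a => Real.sqrt (∑' d, X a d ^ 2) with hVX
  set VY : ℕ → ℝ := fun a => Real.sqrt (∑' c, Y a c ^ 2) with hVY
  set VZ : ℕ → ℝ := fun b => Real.sqrt (∑' c, Z b c ^ 2) with hVZ
  set VW : ℕ → ℝ := fun b => Real.sqrt (∑' d, W b d ^ 2) with hVW
  have hbox : ∑ w ∈ sa ×ˢ sb ×ˢ sc ×ˢ sd,
      X w.1 w.2.2.2 * Y w.1 w.2.2.1 * Z w.2.1 w.2.2.1 * W w.2.1 w.2.2.2 ≤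
      (∑ a ∈ sa, VY a * VX a) * (∑ b ∈ sb, VZ b * VW b) := by
    rw [Finset.sum_product]
    simp only [Finset.sum_product]
    rw [Finset.sum_mul_sum]
    refine Finset.sum_le_sum fun a _ => Finset.sum_le_sum fun b _ => ?_
    have inner_eq : (∑ c ∈ sc, ∑ d ∈ sd, X a d * Y a c * Z b c * W b d) =
        (∑ c ∈ sc, Y a c * Z b c) * (∑ d ∈ sd, X a d * W b d) := by
      rw [Finset.sum_mul_sum]
      exact Finset.sum_congr rfl fun c _ => Finset.sum_congr rfl fun d _ => by ring
    rw [inner_eq]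
    have hYZ : (∑ c ∈ sc, Y a c * Z b c) ≤ VY a * VZ b :=
      cs_partial (fun c => Y a c) (fun c => Z b c) (hY.prod_factor a) (hZ.prod_factor b) sc
    have hXW : (∑ d ∈ sd, X a d * W b d) ≤ VX a * VW b :=
      cs_partial (fun d => X a d) (fun d => W b d) (hX.prod_factor a) (hW.prod_factor b) sd
    have h2' : (0:ℝ) ≤ ∑ d ∈ sd, X a d * W b d :=
      Finset.sum_nonneg fun d _ => mul_nonneg (hX0 _ _) (hW0 _ _)
    calc (∑ c ∈ sc, Y a c * Z b c) * (∑ d ∈ sd, X a d * W b d)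
        ≤ (VY a * VZ b) * (VX a * VW b) :=
          mul_le_mul hYZ hXW h2' (mul_nonneg (Real.sqrt_nonneg _) (Real.sqrt_nonneg _))
      _ = (VY a * VX a) * (VZ b * VW b) := by ring
  have margY := (summable_prod_of_nonneg (fun p => sq_nonneg (Y p.1 p.2))).mp hY
  have margX := (summable_prod_of_nonneg (fun p => sq_nonneg (X p.1 p.2))).mp hX
  have margZ := (summable_prod_of_nonneg (fun p => sq_nonneg (Z p.1 p.2))).mp hZ
  have margW := (summable_prod_of_nonneg (fun p => sq_nonneg (W p.1 p.2))).mp hW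
  have sqV : ∀ (V : ℕ → ℕ → ℝ) (a : ℕ),
      (Real.sqrt (∑' c, V a c ^ 2)) ^ 2 = ∑' c, V a c ^ 2 := fun V a =>
    Real.sq_sqrt (tsum_nonneg fun c => sq_nonneg _)
  have hVYs : Summable fun a => VY a ^ 2 := margY.2.congr fun a => (sqV Y a).symm
  have hVXs : Summable fun a => VX a ^ 2 := margX.2.congr fun a => (sqV X a).symm
  have hVZs : Summable fun b => VZ b ^ 2 := margZ.2.congr fun b => (sqV Z b).symm
  have hVWs : Summable fun b => VW b ^ 2 := margW.2.congr fun b => (sqV W b).symm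
  have tsumV : ∀ (V : ℕ → ℕ → ℝ), Summable (fun p : ℕ × ℕ => V p.1 p.2 ^ 2) →
      ∑' a, (Real.sqrt (∑' c, V a c ^ 2)) ^ 2 = ∑' p : ℕ × ℕ, V p.1 p.2 ^ 2 := by
    intro V hV
    rw [tsum_congr (sqV V), ← Summable.tsum_prod' hV fun a => hV.prod_factor a]
  have hA : (∑ a ∈ sa, VY a * VX a) ≤
      Real.sqrt (∑' p : ℕ × ℕ, Y p.1 p.2 ^ 2) * Real.sqrt (∑' p : ℕ × ℕ, X p.1 p.2 ^ 2) := by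
    have := cs_partial VY VX hVYs hVXs sa
    rwa [show (∑' a, VY a ^ 2) = ∑' p : ℕ × ℕ, Y p.1 p.2 ^ 2 from tsumV Y hY,
      show (∑' a, VX a ^ 2) = ∑' p : ℕ × ℕ, X p.1 p.2 ^ 2 from tsumV X hX] at this
  have hB : (∑ b ∈ sb, VZ b * VW b) ≤
      Real.sqrt (∑' p : ℕ × ℕ, Z p.1 p.2 ^ 2) * Real.sqrt (∑' p : ℕ × ℕ, W p.1 p.2 ^ 2) := by
    have := cs_partial VZ VW hVZs hVWs sb
    rwa [show (∑' b, VZ b ^ 2) = ∑' p : ℕ × ℕ, Z p.1 p.2 ^ 2 from tsumV Z hZ,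
      show (∑' b, VW b ^ 2) = ∑' p : ℕ × ℕ, W p.1 p.2 ^ 2 from tsumV W hW] at this
  calc ∑ w ∈ s, X w.1 w.2.2.2 * Y w.1 w.2.2.1 * Z w.2.1 w.2.2.1 * W w.2.1 w.2.2.2
      ≤ (∑ a ∈ sa, VY a * VX a) * (∑ b ∈ sb, VZ b * VW b) := h1.trans hbox
    _ ≤ (Real.sqrt (∑' p : ℕ × ℕ, Y p.1 p.2 ^ 2) * Real.sqrt (∑' p : ℕ × ℕ, X p.1 p.2 ^ 2)) *
          (Real.sqrt (∑' p : ℕ × ℕ, Z p.1 p.2 ^ 2) * Real.sqrt (∑' p : ℕ × ℕ, W p.1 p.2 ^ 2)) :=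
        mul_le_mul hA hB (Finset.sum_nonneg fun b _ =>
          mul_nonneg (Real.sqrt_nonneg _) (Real.sqrt_nonneg _))
          (mul_nonneg (Real.sqrt_nonneg _) (Real.sqrt_nonneg _))
    _ = _ := by ring

/-- regrouping equivalences -/
def eF : ((ℕ × ℕ) × (ℕ × ℕ)) ≃ (ℕ × ℕ × ℕ × ℕ) :=
  ⟨fun p => (p.1.1, p.1.2, p.2.1, p.2.2), fun q => ((q.1, q.2.1), (q.2.2.1, q.2.2.2)),
    fun ⟨⟨_, _⟩, _, _⟩ => rfl, fun ⟨_, _, _, _⟩ => rfl⟩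

def eH : ((ℕ × ℕ) × (ℕ × ℕ)) ≃ (ℕ × ℕ × ℕ × ℕ) :=
  ⟨fun p => (p.2.1, p.1.1, p.1.2, p.2.2), fun q => ((q.2.1, q.2.2.1), (q.1, q.2.2.2)),
    fun ⟨⟨_, _⟩, _, _⟩ => rfl, fun ⟨_, _, _, _⟩ => rfl⟩

def eK : ((ℕ × ℕ) × (ℕ × ℕ)) ≃ (ℕ × ℕ × ℕ × ℕ) :=
  ⟨fun p => (p.2.1, p.2.2, p.1.1, p.1.2), fun q => ((q.2.2.1, q.2.2.2), (q.1, q.2.1)),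
    fun ⟨⟨_, _⟩, _, _⟩ => rfl, fun ⟨_, _, _, _⟩ => rfl⟩

def eG : ((ℕ × ℕ) × (ℕ × ℕ)) ≃ (ℕ × ℕ × ℕ × ℕ) :=
  ⟨fun p => (p.1.1, p.2.1, p.2.2, p.1.2), fun q => ((q.1, q.2.2.2), (q.2.1, q.2.2.1)),
    fun ⟨⟨_, _⟩, _, _⟩ => rfl, fun ⟨_, _, _, _⟩ => rfl⟩

def phi : ((ℕ × ℕ) × (ℕ × ℕ) × (ℕ × ℕ) × (ℕ × ℕ)) ≃ ((ℕ × ℕ) × (ℕ × ℕ) × (ℕ × ℕ) × (ℕ × ℕ)) :=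
  ⟨fun q => ((q.1.1, q.2.1.1), (q.2.1.2, q.2.2.1.1), (q.2.2.1.2, q.2.2.2.1), (q.1.2, q.2.2.2.2)),
    fun r => ((r.1.1, r.2.2.2.1), (r.1.2, r.2.1.1), (r.2.1.2, r.2.2.1.1), (r.2.2.1.2, r.2.2.2.2)),
    fun ⟨⟨_, _⟩, ⟨_, _⟩, ⟨_, _⟩, _, _⟩ => rfl, fun ⟨⟨_, _⟩, ⟨_, _⟩, ⟨_, _⟩, _, _⟩ => rfl⟩

@[simp] lemma phi_apply (q : (ℕ × ℕ) × (ℕ × ℕ) × (ℕ × ℕ) × (ℕ × ℕ)) :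
    phi q = ((q.1.1, q.2.1.1), (q.2.1.2, q.2.2.1.1), (q.2.2.1.2, q.2.2.2.1), (q.1.2, q.2.2.2.2)) :=
  rfl

/-- marginal data of a square-summable tensor along a regrouping -/
lemma marginal (A : ℕ × ℕ × ℕ × ℕ → ℝ) (hA : Summable fun p => (A p) ^ 2)
    (e : ((ℕ × ℕ) × (ℕ × ℕ)) ≃ (ℕ × ℕ × ℕ × ℕ)) :
    Summable (fun x : ℕ × ℕ => Real.sqrt (∑' y : ℕ × ℕ, A (e (x, y)) ^ 2) ^ 2) ∧
      (∑' x : ℕ × ℕ, Real.sqrt (∑' y : ℕ × ℕ, A (e (x, y)) ^ 2) ^ 2) = ∑' p, A p ^ 2 := by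
  have hB : Summable fun p : (ℕ × ℕ) × (ℕ × ℕ) => A (e p) ^ 2 :=
    (e.summable_iff (f := fun q => A q ^ 2)).mpr hA
  have hsq : ∀ x : ℕ × ℕ, Real.sqrt (∑' y : ℕ × ℕ, A (e (x, y)) ^ 2) ^ 2 =
      ∑' y : ℕ × ℕ, A (e (x, y)) ^ 2 := fun x =>
    Real.sq_sqrt (tsum_nonneg fun _ => sq_nonneg _)
  have hm := (summable_prod_of_nonneg (f := fun p => A (e p) ^ 2)
    (fun p => sq_nonneg (A (e p)))).mp hB
  refine ⟨hm.2.congr fun x => (hsq x).symm, ?_⟩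
  rw [tsum_congr hsq, ← Summable.tsum_prod' hB fun x => hB.prod_factor x,
    e.tsum_eq (f := fun q => A q ^ 2)]

noncomputable def Fm (A : ℕ × ℕ × ℕ × ℕ → ℝ) (x : ℕ × ℕ) : ℝ :=
  Real.sqrt (∑' y : ℕ × ℕ, A (eF (x, y)) ^ 2)

noncomputable def Hm (A : ℕ × ℕ × ℕ × ℕ → ℝ) (x : ℕ × ℕ) : ℝ :=
  Real.sqrt (∑' y : ℕ × ℕ, A (eH (x, y)) ^ 2)

noncomputable def Km (A : ℕ × ℕ × ℕ × ℕ → ℝ) (x : ℕ × ℕ) : ℝ :=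
  Real.sqrt (∑' y : ℕ × ℕ, A (eK (x, y)) ^ 2)

noncomputable def Gm (A : ℕ × ℕ × ℕ × ℕ → ℝ) (x : ℕ × ℕ) : ℝ :=
  Real.sqrt (∑' y : ℕ × ℕ, A (eG (x, y)) ^ 2)

/-- pointwise bound for the contraction -/
lemma pointwise (A : ℕ × ℕ × ℕ × ℕ → ℝ) (hA : Summable fun p => (A p) ^ 2)
    (q : (ℕ × ℕ) × (ℕ × ℕ) × (ℕ × ℕ) × (ℕ × ℕ)) :
    |contract2x2 A q| ≤ Fm A (q.1.1, q.2.1.1) * Hm A (q.2.1.2, q.2.2.1.1) *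
      Km A (q.2.2.1.2, q.2.2.2.1) * Gm A (q.1.2, q.2.2.2.2) := by
  obtain ⟨⟨i₁, i₂⟩, ⟨j₁, j₂⟩, ⟨k₁, k₂⟩, l₁, l₂⟩ := q
  simp only [contract2x2]
  -- slice summabilities
  have injX : Function.Injective (fun p : ℕ × ℕ => ((i₁, j₁, p.1, p.2) : ℕ × ℕ × ℕ × ℕ)) :=
    fun p p' h => by simpa [Prod.ext_iff] using h
  have injY : Function.Injective (fun p : ℕ × ℕ => ((p.1, j₂, k₁, p.2) : ℕ × ℕ × ℕ × ℕ)) :=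
    fun p p' h => by simpa [Prod.ext_iff] using h
  have injZ : Function.Injective (fun p : ℕ × ℕ => ((p.1, p.2, k₂, l₁) : ℕ × ℕ × ℕ × ℕ)) :=
    fun p p' h => by simpa [Prod.ext_iff] using h
  have injW : Function.Injective (fun p : ℕ × ℕ => ((i₂, p.1, p.2, l₂) : ℕ × ℕ × ℕ × ℕ)) :=
    fun p p' h => by simpa [Prod.ext_iff] using h
  have hXs : Summable fun p : ℕ × ℕ => |A (i₁, j₁, p.1, p.2)| ^ 2 :=
    (hA.comp_injective injX).congr fun p => (sq_abs _).symm
  have hYs : Summable fun p : ℕ × ℕ => |A (p.1, j₂, k₁, p.2)| ^ 2 :=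
    (hA.comp_injective injY).congr fun p => (sq_abs _).symm
  have hZs : Summable fun p : ℕ × ℕ => |A (p.1, p.2, k₂, l₁)| ^ 2 :=
    (hA.comp_injective injZ).congr fun p => (sq_abs _).symm
  have hWs : Summable fun p : ℕ × ℕ => |A (i₂, p.1, p.2, l₂)| ^ 2 :=
    (hA.comp_injective injW).congr fun p => (sq_abs _).symm
  have key := key4 (fun a d => |A (i₁, j₁, a, d)|) (fun a c => |A (a, j₂, k₁, c)|)
    (fun b c => |A (b, c, k₂, l₁)|) (fun b d => |A (i₂, b, d, l₂)|)
    (fun _ _ => abs_nonneg _) (fun _ _ => abs_nonneg _) (fun _ _ => abs_nonneg _)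
    (fun _ _ => abs_nonneg _) hXs hYs hZs hWs
  set g : ℕ × ℕ × ℕ × ℕ → ℝ := fun w =>
    |A (i₁, j₁, w.1, w.2.2.2)| * |A (w.1, j₂, k₁, w.2.2.1)| *
      |A (w.2.1, w.2.2.1, k₂, l₁)| * |A (i₂, w.2.1, w.2.2.2, l₂)| with hgdef
  set C : ℝ := Real.sqrt (∑' p : ℕ × ℕ, |A (i₁, j₁, p.1, p.2)| ^ 2) *
      Real.sqrt (∑' p : ℕ × ℕ, |A (p.1, j₂, k₁, p.2)| ^ 2) *
      Real.sqrt (∑' p : ℕ × ℕ, |A (p.1, p.2, k₂, l₁)| ^ 2) *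
      Real.sqrt (∑' p : ℕ × ℕ, |A (i₂, p.1, p.2, l₂)| ^ 2) with hCdef
  have hbound : ∀ s : Finset (ℕ × ℕ × ℕ × ℕ), ∑ w ∈ s, g w ≤ C := fun s => key s
  have hg0 : ∀ w, 0 ≤ g w := fun w => by positivity
  have hgs : Summable g := summable_of_sum_le hg0 hbound
  have htle : ∑' w, g w ≤ C := Summable.tsum_le_of_sum_le hgs hbound
  have habs : ∀ w : ℕ × ℕ × ℕ × ℕ,
      |A (i₁, j₁, w.1, w.2.2.2) * A (w.1, j₂, k₁, w.2.2.1) *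
        A (w.2.1, w.2.2.1, k₂, l₁) * A (i₂, w.2.1, w.2.2.2, l₂)| = g w := fun w => by
    simp only [hgdef, abs_mul]
  have hfabs : Summable fun w : ℕ × ℕ × ℕ × ℕ =>
      |A (i₁, j₁, w.1, w.2.2.2) * A (w.1, j₂, k₁, w.2.2.1) *
        A (w.2.1, w.2.2.1, k₂, l₁) * A (i₂, w.2.1, w.2.2.2, l₂)| :=
    hgs.congr fun w => (habs w).symm
  have hC : C = Fm A (i₁, j₁) * Hm A (j₂, k₁) * Km A (k₂, l₁) * Gm A (i₂, l₂) := by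
    rw [hCdef]
    have e1 : (∑' p : ℕ × ℕ, |A (i₁, j₁, p.1, p.2)| ^ 2) =
        ∑' y : ℕ × ℕ, A (eF ((i₁, j₁), y)) ^ 2 := tsum_congr fun p => sq_abs _
    have e2 : (∑' p : ℕ × ℕ, |A (p.1, j₂, k₁, p.2)| ^ 2) =
        ∑' y : ℕ × ℕ, A (eH ((j₂, k₁), y)) ^ 2 := tsum_congr fun p => sq_abs _
    have e3 : (∑' p : ℕ × ℕ, |A (p.1, p.2, k₂, l₁)| ^ 2) =
        ∑' y : ℕ × ℕ, A (eK ((k₂, l₁), y)) ^ 2 := tsum_congr fun p => sq_abs _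
    have e4 : (∑' p : ℕ × ℕ, |A (i₂, p.1, p.2, l₂)| ^ 2) =
        ∑' y : ℕ × ℕ, A (eG ((i₂, l₂), y)) ^ 2 := tsum_congr fun p => sq_abs _
    rw [e1, e2, e3, e4]
    rfl
  calc |∑' w : ℕ × ℕ × ℕ × ℕ,
      A (i₁, j₁, w.1, w.2.2.2) * A (w.1, j₂, k₁, w.2.2.1) *
        A (w.2.1, w.2.2.1, k₂, l₁) * A (i₂, w.2.1, w.2.2.2, l₂)|
      ≤ ∑' w : ℕ × ℕ × ℕ × ℕ,
        |A (i₁, j₁, w.1, w.2.2.2) * A (w.1, j₂, k₁, w.2.2.1) *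
          A (w.2.1, w.2.2.1, k₂, l₁) * A (i₂, w.2.1, w.2.2.2, l₂)| := by
        exact norm_tsum_le_tsum_norm (f := fun w : ℕ × ℕ × ℕ × ℕ =>
            A (i₁, j₁, w.1, w.2.2.2) * A (w.1, j₂, k₁, w.2.2.1) *
              A (w.2.1, w.2.2.1, k₂, l₁) * A (i₂, w.2.1, w.2.2.2, l₂)) hfabs
    _ = ∑' w, g w := tsum_congr habs
    _ ≤ C := htle
    _ = _ := hC

end Aux

set_option maxHeartbeats 2000000 in
/-- If `A` has finite Hilbert-Schmidt norm, then the tensor `T` obtained by contracting four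
copies of `A` in a 2×2 plaquette satisfies `‖T‖ ≤ ‖A‖⁴`. -/
theorem stmt1 (A : ℕ × ℕ × ℕ × ℕ → ℝ) (hA : Summable fun p => (A p) ^ 2) :
    hsNorm (contract2x2 A) ≤ (hsNorm A) ^ 4 := by
  classical
  have hF2 : Summable (fun x : ℕ × ℕ => Fm A x ^ 2) := (marginal A hA eF).1
  have hH2 : Summable (fun x : ℕ × ℕ => Hm A x ^ 2) := (marginal A hA eH).1
  have hK2 : Summable (fun x : ℕ × ℕ => Km A x ^ 2) := (marginal A hA eK).1
  have hG2 : Summable (fun x : ℕ × ℕ => Gm A x ^ 2) := (marginal A hA eG).1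
  have hFt : (∑' x : ℕ × ℕ, Fm A x ^ 2) = ∑' p, A p ^ 2 := (marginal A hA eF).2
  have hHt : (∑' x : ℕ × ℕ, Hm A x ^ 2) = ∑' p, A p ^ 2 := (marginal A hA eH).2
  have hKt : (∑' x : ℕ × ℕ, Km A x ^ 2) = ∑' p, A p ^ 2 := (marginal A hA eK).2
  have hGt : (∑' x : ℕ × ℕ, Gm A x ^ 2) = ∑' p, A p ^ 2 := (marginal A hA eG).2
  set S : ℝ := ∑' p : ℕ × ℕ × ℕ × ℕ, A p ^ 2 with hSdef
  have hS0 : 0 ≤ S := tsum_nonneg fun _ => sq_nonneg _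
  -- the bounding tensor
  set Bnd : ((ℕ × ℕ) × (ℕ × ℕ) × (ℕ × ℕ) × (ℕ × ℕ)) → ℝ := fun q =>
    Fm A (q.1.1, q.2.1.1) * Hm A (q.2.1.2, q.2.2.1.1) *
      Km A (q.2.2.1.2, q.2.2.2.1) * Gm A (q.1.2, q.2.2.2.2) with hBnddef
  have h34 : Summable (fun p : (ℕ × ℕ) × (ℕ × ℕ) => Km A p.1 ^ 2 * Gm A p.2 ^ 2) :=
    hK2.mul_of_nonneg hG2 (fun _ => sq_nonneg _) (fun _ => sq_nonneg _)
  have h234 : Summable (fun p : (ℕ × ℕ) × ((ℕ × ℕ) × (ℕ × ℕ)) =>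
      Hm A p.1 ^ 2 * (Km A p.2.1 ^ 2 * Gm A p.2.2 ^ 2)) :=
    hH2.mul_of_nonneg h34 (fun _ => sq_nonneg _)
      (fun p => mul_nonneg (sq_nonneg _) (sq_nonneg _))
  have hPs : Summable (fun r : (ℕ × ℕ) × (ℕ × ℕ) × (ℕ × ℕ) × (ℕ × ℕ) =>
      Fm A r.1 ^ 2 * (Hm A r.2.1 ^ 2 * (Km A r.2.2.1 ^ 2 * Gm A r.2.2.2 ^ 2))) :=
    hF2.mul_of_nonneg h234 (fun _ => sq_nonneg _)
      (fun p => mul_nonneg (sq_nonneg _) (mul_nonneg (sq_nonneg _) (sq_nonneg _)))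
  have hPt : (∑' r : (ℕ × ℕ) × (ℕ × ℕ) × (ℕ × ℕ) × (ℕ × ℕ),
      Fm A r.1 ^ 2 * (Hm A r.2.1 ^ 2 * (Km A r.2.2.1 ^ 2 * Gm A r.2.2.2 ^ 2))) = S ^ 4 := by
    have e1 : (∑' r : (ℕ × ℕ) × (ℕ × ℕ) × (ℕ × ℕ) × (ℕ × ℕ),
        Fm A r.1 ^ 2 * (Hm A r.2.1 ^ 2 * (Km A r.2.2.1 ^ 2 * Gm A r.2.2.2 ^ 2))) =
        (∑' x : ℕ × ℕ, Fm A x ^ 2) * ∑' y : (ℕ × ℕ) × (ℕ × ℕ) × (ℕ × ℕ),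
          Hm A y.1 ^ 2 * (Km A y.2.1 ^ 2 * Gm A y.2.2 ^ 2) :=
      tsum_prod_mul hF2 h234 (fun _ => sq_nonneg _)
        (fun p => mul_nonneg (sq_nonneg _) (mul_nonneg (sq_nonneg _) (sq_nonneg _)))
    have e2 : (∑' y : (ℕ × ℕ) × (ℕ × ℕ) × (ℕ × ℕ),
        Hm A y.1 ^ 2 * (Km A y.2.1 ^ 2 * Gm A y.2.2 ^ 2)) =
        (∑' x : ℕ × ℕ, Hm A x ^ 2) * ∑' z : (ℕ × ℕ) × (ℕ × ℕ), Km A z.1 ^ 2 * Gm A z.2 ^ 2 :=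
      tsum_prod_mul hH2 h34 (fun _ => sq_nonneg _)
        (fun p => mul_nonneg (sq_nonneg _) (sq_nonneg _))
    have e3 : (∑' z : (ℕ × ℕ) × (ℕ × ℕ), Km A z.1 ^ 2 * Gm A z.2 ^ 2) =
        (∑' x : ℕ × ℕ, Km A x ^ 2) * ∑' x : ℕ × ℕ, Gm A x ^ 2 :=
      tsum_prod_mul hK2 hG2 (fun _ => sq_nonneg _) (fun _ => sq_nonneg _)
    rw [e1, e2, e3, hFt, hHt, hKt, hGt]
    ring
  have hBs : Summable (fun q => Bnd q ^ 2) := by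
    have h1 := hPs.comp_injective phi.injective
    refine h1.congr fun q => ?_
    simp only [Function.comp_apply, phi_apply, hBnddef]
    ring
  have hBt : (∑' q, Bnd q ^ 2) = S ^ 4 := by
    have : (∑' q, Bnd q ^ 2) = ∑' q : (ℕ × ℕ) × (ℕ × ℕ) × (ℕ × ℕ) × (ℕ × ℕ),
        (fun r : (ℕ × ℕ) × (ℕ × ℕ) × (ℕ × ℕ) × (ℕ × ℕ) =>
          Fm A r.1 ^ 2 * (Hm A r.2.1 ^ 2 * (Km A r.2.2.1 ^ 2 * Gm A r.2.2.2 ^ 2))) (phi q) := by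
      refine tsum_congr fun q => ?_
      simp only [phi_apply, hBnddef]
      ring
    rw [this]
    exact (phi.tsum_eq _).trans hPt
  have hsq : ∀ q, contract2x2 A q ^ 2 ≤ Bnd q ^ 2 := fun q => by
    have h := pointwise A hA q
    calc contract2x2 A q ^ 2 = |contract2x2 A q| ^ 2 := (sq_abs _).symm
      _ ≤ Bnd q ^ 2 := pow_le_pow_left₀ (abs_nonneg _) h 2
  have hTs : Summable (fun q => contract2x2 A q ^ 2) :=
    Summable.of_nonneg_of_le (fun q => sq_nonneg _) hsq hBs
  have hle : (∑' q, contract2x2 A q ^ 2) ≤ S ^ 4 :=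
    (Summable.tsum_le_tsum hsq hTs hBs).trans_eq hBt
  have hfinal : hsNorm (contract2x2 A) ≤ Real.sqrt (S ^ 4) := Real.sqrt_le_sqrt hle
  refine hfinal.trans_eq ?_
  rw [show S ^ 4 = (S ^ 2) ^ 2 by ring, Real.sqrt_sq (by positivity)]
  rw [hsNorm, ← hSdef, show Real.sqrt S ^ 4 = (Real.sqrt S ^ 2) ^ 2 by ring,
    Real.sq_sqrt hS0]
end

section
/- Let M : ℕ × ℕ → ℝ be a Hilbert-Schmidt matrix with M₀₀ = 1 and (∑_{(i,j)≠(0,0)} M_{ij}²)^{1/2} ≤ ε ≤ 1/4. Set l_x = M_{x0} and r_x = M_{0x} for x ≥ 1, l₀ = r₀ = 0, and B = |l⟩⟨e₀| − |e₀⟩⟨r|, G = exp(B). Then the conjugated matrix M̃ = G⁻¹ M G satisfies (∑_{x≥1} M̃_{0x}²)^{1/2} ≤ C ε² and (∑_{x≥1} M̃_{x0}²)^{1/2} ≤ C ε² for an absolute constant C. -/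
open NormedSpace

/-- `V = ℓ²(ℕ, ℝ)`. -/
noncomputable abbrev V : Type := lp (fun _ : ℕ => ℝ) 2

/-- The standard orthonormal basis vector `e_i` of `V`. -/
noncomputable def e (i : ℕ) : V := lp.single 2 i (1 : ℝ)

open scoped ENNReal NNReal Nat
set_option maxHeartbeats 1600000


lemma e_apply (i j : ℕ) : (e i) j = if j = i then 1 else 0 := by
  simp [e, lp.single_apply, Pi.single_apply]

lemma inner_e (i : ℕ) (f : V) : (inner ℝ (e i) f : ℝ) = f i := by
  rw [e, lp.inner_single_left]
  simp [RCLike.inner_apply]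

lemma norm_e (i : ℕ) : ‖e i‖ = 1 := by
  have := lp.norm_single (E := fun _ : ℕ => ℝ) (p := 2) (by norm_num) i (1:ℝ)
  simpa [e] using this

lemma hasSum_sq (f : V) : HasSum (fun i => (f i)^2) (‖f‖^2) := by
  have h := lp.hasSum_inner (𝕜 := ℝ) f f
  have : (inner ℝ f f : ℝ) = ‖f‖^2 := real_inner_self_eq_norm_sq f
  rw [this] at h
  convert h using 2 with i
  · rfl
  · rw [real_inner_self_eq_norm_sq, Real.norm_eq_abs, sq_abs]

lemma memV_of_sq {f : ℕ → ℝ} (hf : Summable (fun i => (f i) ^ 2)) : Memℓp f 2 := by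
  apply memℓp_gen
  have : (fun i => ‖f i‖ ^ (2:ℝ≥0∞).toReal) = fun i => f i ^ 2 := by
    funext i
    rw [show (2:ℝ≥0∞).toReal = ((2:ℕ):ℝ) by norm_num, Real.rpow_natCast]
    rw [Real.norm_eq_abs, sq_abs]
  rw [this]; exact hf

lemma opNorm_le_hs (T : V →L[ℝ] V) (c : ℝ) (hc : 0 ≤ c)
    (hsum : Summable (fun p : ℕ × ℕ => (inner ℝ (e p.1) (T (e p.2)) : ℝ) ^ 2))
    (hle : ∑' p : ℕ × ℕ, (inner ℝ (e p.1) (T (e p.2)) : ℝ) ^ 2 ≤ c ^ 2) :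
    ‖T‖ ≤ c := by
  set t : ℕ → ℕ → ℝ := fun x j => (inner ℝ (e x) (T (e j)) : ℝ) with ht
  have hrow : ∀ x, Summable (fun j => t x j ^ 2) := fun x => hsum.prod_factor x
  set ρ : ℕ → V := fun x => ⟨fun j => t x j, memV_of_sq (hrow x)⟩ with hρdef
  have hρ : ∀ x j, (ρ x : ℕ → ℝ) j = t x j := fun _ _ => rfl
  have hρn : HasSum (fun x => ‖ρ x‖^2)
      (∑' p : ℕ × ℕ, (inner ℝ (e p.1) (T (e p.2)) : ℝ) ^ 2) := by
    refine hsum.hasSum.prod_fiberwise (fun x => ?_)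
    exact hasSum_sq (ρ x)
  have key : ∀ (v : V) (x : ℕ), (T v) x = (inner ℝ (ρ x) v : ℝ) := by
    intro v x
    have hv : HasSum (fun j => lp.single 2 j (v j)) v :=
      lp.hasSum_single (by norm_num) v
    have h2 : HasSum (fun j => (innerSL ℝ (e x)) (T (lp.single 2 j (v j))))
        ((innerSL ℝ (e x)) (T v)) := (hv.mapL T).mapL (innerSL ℝ (e x))
    have h3 : HasSum (fun j => t x j * v j) ((inner ℝ (e x) (T v)) : ℝ) := by
      convert h2 using 2 with j
      have hs : lp.single 2 j (v j) = v j • e j := by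
        rw [e, ← lp.single_smul, smul_eq_mul, mul_one]
      rw [hs, map_smul]
      simp only [innerSL_apply_apply, real_inner_smul_right]
      ring
      simp only [innerSL_apply_apply]
    have h4 : HasSum (fun j => t x j * v j) ((inner ℝ (ρ x) v) : ℝ) := by
      have h5 := lp.hasSum_inner (𝕜 := ℝ) (ρ x) v
      convert h5 using 2 with j
      · rfl
      · rw [hρ, RCLike.inner_apply', conj_trivial]
    rw [← inner_e x (T v), h3.unique h4]
  refine T.opNorm_le_bound hc (fun v => ?_)
  have h5 : ∀ x, ((T v) x)^2 ≤ ‖ρ x‖^2 * ‖v‖^2 := by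
    intro x
    rw [key v x]
    have h6 := abs_real_inner_le_norm (ρ x) v
    have h7 : |(inner ℝ (ρ x) v : ℝ)|^2 = (inner ℝ (ρ x) v : ℝ)^2 := sq_abs _
    nlinarith [abs_nonneg (inner ℝ (ρ x) v : ℝ), norm_nonneg (ρ x), norm_nonneg v]
  have hsum2 : Summable (fun x => ‖ρ x‖^2 * ‖v‖^2) := hρn.summable.mul_right _
  have h6 : ‖T v‖^2 ≤ (c * ‖v‖)^2 := by
    have e1 : ‖T v‖^2 = ∑' x, ((T v) x)^2 := (hasSum_sq (T v)).tsum_eq.symm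
    have e2 : ∑' x, ((T v) x)^2 ≤ ∑' x, ‖ρ x‖^2 * ‖v‖^2 :=
      Summable.tsum_le_tsum h5 (hasSum_sq (T v)).summable hsum2
    have e3 : ∑' x, ‖ρ x‖^2 * ‖v‖^2 = (∑' x, ‖ρ x‖^2) * ‖v‖^2 := tsum_mul_right
    have e4 : (∑' x, ‖ρ x‖^2) = ∑' p : ℕ × ℕ, (inner ℝ (e p.1) (T (e p.2)) : ℝ) ^ 2 :=
      hρn.tsum_eq
    have hv2 : (0:ℝ) ≤ ‖v‖^2 := sq_nonneg _
    nlinarith [sq_nonneg ‖v‖]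
  calc ‖T v‖ = Real.sqrt (‖T v‖^2) := (Real.sqrt_sq (norm_nonneg _)).symm
    _ ≤ Real.sqrt ((c * ‖v‖)^2) := Real.sqrt_le_sqrt h6
    _ = c * ‖v‖ := Real.sqrt_sq (by positivity)

lemma exp_remainder {A : Type*} [NormedRing A] [NormedAlgebra ℝ A] [CompleteSpace A]
    (x : A) (hx : ‖x‖ ≤ 1/2) : ‖exp x - 1 - x‖ ≤ 2 * ‖x‖^2 := by
  have h1 : Summable (fun n => ‖(n !⁻¹ : ℝ) • x ^ n‖) := norm_expSeries_summable' (𝕂 := ℝ) x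
  have h2 : Summable (fun n => (n !⁻¹ : ℝ) • x ^ n) := h1.of_norm
  have h3 := Summable.sum_add_tsum_nat_add (f := fun n => (n !⁻¹ : ℝ) • x ^ n) 2 h2
  have h4 : exp x = ∑' n : ℕ, (n !⁻¹ : ℝ) • x ^ n := by rw [exp_eq_tsum ℝ]
  have h5 : (∑ i ∈ Finset.range 2, ((i !) ⁻¹ : ℝ) • x ^ i) = 1 + x := by
    simp [Finset.sum_range_succ, Nat.factorial]
  have h6 : exp x - 1 - x = ∑' i : ℕ, (((i+2)! ⁻¹ : ℝ)) • x ^ (i+2) := by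
    rw [h4, ← h3, h5]; abel
  have hs1 : Summable (fun i : ℕ => ‖(((i+2)! ⁻¹ : ℝ)) • x ^ (i+2)‖) :=
    (summable_nat_add_iff 2).2 h1
  have hb : ∀ i : ℕ, ‖(((i+2)! ⁻¹ : ℝ)) • x ^ (i+2)‖ ≤ ‖x‖^2 * (1/2)^i := by
    intro i
    rw [norm_smul]
    have hf : ((i+2)! : ℝ) ≥ 1 := by exact_mod_cast Nat.one_le_iff_ne_zero.2 (Nat.factorial_ne_zero _)
    have h7 : ‖x ^ (i+2)‖ ≤ ‖x‖ ^ (i+2) := norm_pow_le' x (by omega)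
    have h8 : ‖x‖ ^ (i + 2) = ‖x‖^2 * ‖x‖^i := by ring
    have h9 : ‖x‖^i ≤ (1/2)^i := pow_le_pow_left₀ (norm_nonneg x) hx i
    have h10 : ‖((i+2)! ⁻¹ : ℝ)‖ ≤ 1 := by
      rw [Real.norm_eq_abs, abs_of_nonneg (by positivity)]
      rw [inv_le_one_iff₀]; right; exact hf
    nlinarith [norm_nonneg (x ^ (i+2)), pow_nonneg (norm_nonneg x) i, sq_nonneg ‖x‖,
      pow_nonneg (norm_nonneg x) (i+2)]
  have hs2 : Summable (fun i : ℕ => ‖x‖^2 * (1/2)^i) :=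
    (summable_geometric_of_lt_one (by norm_num) (by norm_num)).mul_left _
  calc ‖exp x - 1 - x‖ = ‖∑' i : ℕ, (((i+2)! ⁻¹ : ℝ)) • x ^ (i+2)‖ := by rw [h6]
    _ ≤ ∑' i : ℕ, ‖(((i+2)! ⁻¹ : ℝ)) • x ^ (i+2)‖ := norm_tsum_le_tsum_norm hs1
    _ ≤ ∑' i : ℕ, ‖x‖^2 * (1/2)^i := Summable.tsum_le_tsum hb hs1 hs2
    _ = ‖x‖^2 * (1 - 1/2)⁻¹ := by
        rw [tsum_mul_left, tsum_geometric_of_lt_one (by norm_num) (by norm_num)]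
    _ = 2 * ‖x‖^2 := by norm_num; ring
  
lemma norm_exp_le_two {A : Type*} [NormedRing A] [NormedAlgebra ℝ A] [CompleteSpace A]
    [NormOneClass A] (x : A) (hx : ‖x‖ ≤ 1/2) : ‖exp x‖ ≤ 2 := by
  have h := exp_remainder x hx
  have : exp x = (exp x - 1 - x) + 1 + x := by abel
  rw [this]
  refine le_trans (norm_add_le _ _) ?_
  refine le_trans (add_le_add (norm_add_le _ _) le_rfl) ?_
  rw [norm_one]
  nlinarith [norm_nonneg x, sq_nonneg ‖x‖]

-- step 2 helper
lemma norm_le_of_coords (M : ℕ × ℕ → ℝ) (hMsum : Summable (fun p : ℕ × ℕ => (M p) ^ 2)) (ε : ℝ)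
    (hS : ∑' p : {p : ℕ × ℕ // p ≠ (0, 0)}, (M p.1) ^ 2 ≤ ε ^ 2) (hε0 : 0 ≤ ε)
    (v : V) (ι : ℕ → ℕ × ℕ) (hinj : Function.Injective ι) (hι0 : ∀ x, x ≠ 0 → ι x ≠ (0, 0))
    (hv : ∀ x, v x = if x = 0 then 0 else M (ι x)) : ‖v‖ ≤ ε := by
  have hsumv : Summable (fun x => (v x) ^ 2) := (hasSum_sq v).summable
  have hshift : Summable (fun x => (v (x + 1)) ^ 2) := by
    exact (summable_nat_add_iff 1).2 hsumv
  have h0 : ∑' x : ℕ, (v x)^2 = (v 0)^2 + ∑' x, (v (x+1))^2 := Summable.tsum_eq_zero_add hsumv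
  have hv0 : v 0 = 0 := by rw [hv]; simp
  have hcomp : ∑' x, (v (x+1))^2 ≤ ∑' p : {p : ℕ × ℕ // p ≠ (0, 0)}, (M p.1) ^ 2 := by
    refine Summable.tsum_le_tsum_of_inj (fun x : ℕ => (⟨ι (x+1), hι0 _ (Nat.succ_ne_zero x)⟩ :
        {p : ℕ × ℕ // p ≠ (0, 0)})) ?_ (fun c _ => sq_nonneg _) (fun x => ?_) hshift
        (hMsum.subtype _)
    · intro a b hab
      have := hinj (congrArg Subtype.val hab)
      omega
    · rw [hv]
      simp
  have hn2 : ‖v‖^2 ≤ ε^2 := by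
    have heq := (hasSum_sq v).tsum_eq
    rw [← heq, h0, hv0]
    simpa using le_trans hcomp hS
  calc ‖v‖ = Real.sqrt (‖v‖^2) := (Real.sqrt_sq (norm_nonneg _)).symm
    _ ≤ Real.sqrt (ε^2) := Real.sqrt_le_sqrt hn2
    _ = ε := Real.sqrt_sq hε0

lemma core (M : ℕ × ℕ → ℝ) (ε : ℝ) (Mop : V →L[ℝ] V) (l r : V)
    (hMsum : Summable (fun p : ℕ × ℕ => (M p) ^ 2))
    (hM00 : M (0, 0) = 1)
    (hsqrt : Real.sqrt (∑' p : {p : ℕ × ℕ // p ≠ (0, 0)}, (M p.1) ^ 2) ≤ ε)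
    (hε : ε ≤ 1 / 4)
    (hent : ∀ i j : ℕ, (inner ℝ (e i) (Mop (e j)) : ℝ) = M (i, j))
    (hl : ∀ x : ℕ, l x = if x = 0 then 0 else M (x, 0))
    (hr : ∀ x : ℕ, r x = if x = 0 then 0 else M (0, x))
    (B : V →L[ℝ] V)
    (hB : B = (innerSL ℝ (e 0)).smulRight l - (innerSL ℝ r).smulRight (e 0)) :
    Real.sqrt (∑' x : {x : ℕ // x ≠ 0},
      (inner ℝ (e x.1) (((exp (-B)).comp (Mop.comp (exp B))) (e 0)) : ℝ) ^ 2) ≤ 40 * ε ^ 2 := by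
  have hε0 : 0 ≤ ε := le_trans (Real.sqrt_nonneg _) hsqrt
  -- step 1
  have hSnn : 0 ≤ ∑' p : {p : ℕ × ℕ // p ≠ (0, 0)}, (M p.1) ^ 2 := tsum_nonneg (fun _ => sq_nonneg _)
  have hS : ∑' p : {p : ℕ × ℕ // p ≠ (0, 0)}, (M p.1) ^ 2 ≤ ε ^ 2 := by
    have := Real.sq_sqrt hSnn
    nlinarith [Real.sqrt_nonneg (∑' p : {p : ℕ × ℕ // p ≠ (0, 0)}, (M p.1) ^ 2)]
  -- step 2
  have hln : ‖l‖ ≤ ε := by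
    refine norm_le_of_coords M hMsum ε hS hε0 l (fun x => (x, 0)) ?_ ?_ hl
    · intro a b hab; exact congrArg Prod.fst hab
    · intro x hx; simp [hx]
  have hrn : ‖r‖ ≤ ε := by
    refine norm_le_of_coords M hMsum ε hS hε0 r (fun x => (0, x)) ?_ ?_ hr
    · intro a b hab; exact congrArg Prod.snd hab
    · intro x hx; simp [hx]
  -- step 3
  set P : V →L[ℝ] V := (innerSL ℝ (e 0)).smulRight (e 0) with hPdef
  set E : V →L[ℝ] V := Mop - P with hEdef
  set F : ℕ × ℕ → ℝ := fun p => if p = ((0:ℕ), (0:ℕ)) then 0 else M p with hFdef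
  have hPapply : ∀ v : V, P v = (inner ℝ (e 0) v : ℝ) • e 0 := by
    intro v; rw [hPdef]; rfl
  have hEent : ∀ i j : ℕ, (inner ℝ (e i) (E (e j)) : ℝ) = F (i, j) := by
    intro i j
    have h1 : E (e j) = Mop (e j) - P (e j) := rfl
    rw [h1, inner_sub_right, hent, hPapply, real_inner_smul_right, inner_e, inner_e, e_apply,
      e_apply]
    simp only [hFdef]
    by_cases hi : i = 0 <;> by_cases hj : j = 0
    · subst hi; subst hj
      rw [hM00]
      norm_num
    · rw [if_neg (fun hc => hj (Prod.ext_iff.1 hc).2), if_neg (fun hc => hj hc.symm)]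
      ring
    · rw [if_neg (fun hc => hi (Prod.ext_iff.1 hc).1), if_neg hi]
      ring
    · rw [if_neg (fun hc => hi (Prod.ext_iff.1 hc).1), if_neg hi]
      ring
  have hEnt' : (fun p : ℕ × ℕ => (inner ℝ (e p.1) (E (e p.2)) : ℝ) ^ 2) = fun p => F p ^ 2 :=
    funext fun p => by rw [hEent p.1 p.2]
  have hF2sum : Summable (fun p => F p ^ 2) := by
    refine Summable.of_nonneg_of_le (fun _ => sq_nonneg _) (fun p => ?_) hMsum
    rw [hFdef]; dsimp only; split_ifs with h
    · simpa using sq_nonneg (M p)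
    · exact le_rfl
  have hF2le : ∑' p : ℕ × ℕ, F p ^ 2 ≤ ε ^ 2 := by
    have hsupp : Function.support (fun p => F p ^ 2) ⊆ {p : ℕ × ℕ | p ≠ (0, 0)} := by
      intro p hp
      simp only [Function.mem_support] at hp
      intro hc
      apply hp
      rw [hFdef]; simp [hc]
    have h1 : ∑' p : {p : ℕ × ℕ // p ≠ (0, 0)}, F p.1 ^ 2 = ∑' p : ℕ × ℕ, F p ^ 2 :=
      tsum_subtype_eq_of_support_subset hsupp
    have h2 : ∑' p : {p : ℕ × ℕ // p ≠ (0, 0)}, F p.1 ^ 2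
        = ∑' p : {p : ℕ × ℕ // p ≠ (0, 0)}, (M p.1) ^ 2 := by
      refine tsum_congr (fun b => ?_)
      rw [hFdef]; dsimp only; rw [if_neg b.2]
    rw [← h1, h2]; exact hS
  have hEn : ‖E‖ ≤ ε := by
    refine opNorm_le_hs E ε hε0 ?_ ?_
    · rw [hEnt']; exact hF2sum
    · rw [hEnt']; exact hF2le
  have hPn : ‖P‖ ≤ 1 := by
    rw [hPdef, ContinuousLinearMap.norm_smulRight_apply, innerSL_apply_norm, norm_e]
    norm_num
  have hMopn : ‖Mop‖ ≤ 1 + ε := by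
    have : Mop = P + E := by rw [hEdef]; abel
    rw [this]
    exact le_trans (norm_add_le _ _) (by linarith)
  -- step 4
  have hBn : ‖B‖ ≤ 2 * ε := by
    rw [hB]
    refine le_trans (norm_sub_le _ _) ?_
    rw [ContinuousLinearMap.norm_smulRight_apply, ContinuousLinearMap.norm_smulRight_apply,
      innerSL_apply_norm, innerSL_apply_norm, norm_e]
    nlinarith [norm_nonneg r]
  have hBhalf : ‖B‖ ≤ 1 / 2 := by linarith
  -- step 5
  have hl0 : l 0 = 0 := by rw [hl]; simp
  have hr0 : r 0 = 0 := by rw [hr]; simp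
  have he00 : (inner ℝ (e 0) (e 0) : ℝ) = 1 := by rw [inner_e, e_apply]; simp
  have hie0l : (inner ℝ (e 0) l : ℝ) = 0 := by rw [inner_e]; exact hl0
  have hire0 : (inner ℝ r (e 0) : ℝ) = 0 := by rw [real_inner_comm, inner_e]; exact hr0
  have hBapply : ∀ v : V, B v = (inner ℝ (e 0) v : ℝ) • l - (inner ℝ r v : ℝ) • e 0 := by
    intro v; rw [hB]; rfl
  have hBe0 : B (e 0) = l := by rw [hBapply, he00, hire0]; simp
  have hBl : B l = -(inner ℝ r l : ℝ) • e 0 := by rw [hBapply, hie0l]; simp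
  have hMope0 : Mop (e 0) = e 0 + l := by
    apply lp.ext
    funext i
    have h1 : (Mop (e 0) : ℕ → ℝ) i = M (i, 0) := by rw [← inner_e, hent]
    have h2 : ((e 0 + l : V) : ℕ → ℝ) i = (e 0) i + l i := by rw [lp.coeFn_add]; rfl
    rw [h1, h2, e_apply, hl]
    by_cases hi : i = 0
    · subst hi; rw [hM00]; simp
    · simp [hi]
  have hPl : P l = 0 := by rw [hPapply, hie0l]; simp
  have hMopl : Mop l = E l := by
    have h1 : E l = Mop l - P l := rfl
    rw [h1, hPl, sub_zero]
  -- step 6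
  have hNontriv : Nontrivial V := ⟨⟨e 0, 0, by
    intro hc
    have h1 := norm_e 0
    rw [hc] at h1; simp at h1⟩⟩
  set g : V →L[ℝ] V := exp B with hgdef
  set h : V →L[ℝ] V := exp (-B) with hhdef
  set R : V →L[ℝ] V := g - 1 - B with hRdef
  set S : V →L[ℝ] V := h - 1 - (-B) with hSdef
  have hRn : ‖R‖ ≤ 8 * ε^2 := by
    have h1 := exp_remainder B hBhalf
    rw [hgdef] at hRdef
    rw [hRdef]
    nlinarith [norm_nonneg B]
  have hSn : ‖S‖ ≤ 8 * ε^2 := by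
    have h2 := exp_remainder (-B) (by rwa [norm_neg])
    rw [norm_neg] at h2
    rw [hhdef] at hSdef
    rw [hSdef]
    nlinarith [norm_nonneg B]
  have hhn : ‖h‖ ≤ 2 := by
    rw [hhdef]; exact norm_exp_le_two (-B) (by rwa [norm_neg])
  have hgapp : ∀ v : V, g v = v + B v + R v := by
    intro v
    have h1 : g = 1 + B + R := by rw [hRdef]; abel
    rw [h1]
    simp [ContinuousLinearMap.add_apply]
  have hhapp : ∀ v : V, h v = v - B v + S v := by
    intro v
    have h1 : h = 1 + (-B) + S := by rw [hSdef]; abel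
    rw [h1]
    simp [ContinuousLinearMap.add_apply, ContinuousLinearMap.neg_apply, sub_eq_add_neg]
  -- step 7
  set u : V := E l + Mop (R (e 0)) with hudef
  have hun : ‖u‖ ≤ 11 * ε^2 := by
    have h1 : ‖E l‖ ≤ ε * ε :=
      le_trans (E.le_opNorm l) (mul_le_mul hEn hln (norm_nonneg _) hε0)
    have h2 : ‖Mop (R (e 0))‖ ≤ (1 + ε) * (8 * ε^2) := by
      refine le_trans (Mop.le_opNorm _) ?_
      have h3 : ‖R (e 0)‖ ≤ 8 * ε^2 := by
        have h4 := R.le_opNorm (e 0)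
        rw [norm_e] at h4
        nlinarith [norm_nonneg (R (e 0))]
      exact mul_le_mul hMopn h3 (norm_nonneg _) (by positivity)
    rw [hudef]
    refine le_trans (norm_add_le _ _) ?_
    nlinarith
  have hMge0 : Mop (g (e 0)) = (e 0 + l) + u := by
    rw [hgapp, hBe0, map_add, map_add, hMope0, hMopl, hudef]
    abel
  set w : V := S (e 0 + l) + h u with hwdef
  have hv : h (Mop (g (e 0))) = (1 + (inner ℝ r l : ℝ)) • e 0 + w := by
    rw [hMge0, map_add, hhapp (e 0 + l), map_add, hBe0, hBl, hwdef]
    module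
  have hwn : ‖w‖ ≤ 32 * ε^2 := by
    have h1 : ‖S (e 0 + l)‖ ≤ (8*ε^2) * (1 + ε) := by
      refine le_trans (S.le_opNorm _) ?_
      have h2 : ‖e 0 + l‖ ≤ 1 + ε := by
        refine le_trans (norm_add_le _ _) ?_
        rw [norm_e]; linarith
      exact mul_le_mul hSn h2 (norm_nonneg _) (by positivity)
    have h3 : ‖h u‖ ≤ 2 * (11 * ε^2) := by
      refine le_trans (h.le_opNorm _) ?_
      exact mul_le_mul hhn hun (norm_nonneg _) (by norm_num)
    rw [hwdef]
    refine le_trans (norm_add_le _ _) ?_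
    nlinarith
  -- step 8
  have happly : (h.comp (Mop.comp g)) (e 0) = h (Mop (g (e 0))) := rfl
  have hcoord : ∀ x : ℕ, x ≠ 0 →
      (inner ℝ (e x) ((h.comp (Mop.comp g)) (e 0)) : ℝ) = w x := by
    intro x hx
    rw [inner_e, happly, hv]
    have h1 : ((((1 + (inner ℝ r l : ℝ)) • e 0 + w : V)) : ℕ → ℝ) x
        = (1 + (inner ℝ r l : ℝ)) * (e 0) x + w x := by
      rw [lp.coeFn_add, lp.coeFn_smul]; rfl
    rw [h1, e_apply, if_neg hx]; ring
  have hsum_w : Summable (fun x : ℕ => (w x)^2) := (hasSum_sq w).summable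
  have hfinal : ∑' x : {x : ℕ // x ≠ 0},
      (inner ℝ (e x.1) ((h.comp (Mop.comp g)) (e 0)) : ℝ) ^ 2 ≤ ‖w‖^2 := by
    have h1 : ∑' x : {x : ℕ // x ≠ 0},
        (inner ℝ (e x.1) ((h.comp (Mop.comp g)) (e 0)) : ℝ) ^ 2
        = ∑' x : {x : ℕ // x ≠ 0}, (w x.1)^2 :=
      tsum_congr (fun b => by rw [hcoord b.1 b.2])
    rw [h1, ← (hasSum_sq w).tsum_eq]
    exact Summable.tsum_subtype_le (fun x : ℕ => (w x)^2) _ (fun _ => sq_nonneg _) hsum_w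
  calc Real.sqrt (∑' x : {x : ℕ // x ≠ 0},
        (inner ℝ (e x.1) ((h.comp (Mop.comp g)) (e 0)) : ℝ) ^ 2)
      ≤ Real.sqrt (‖w‖^2) := Real.sqrt_le_sqrt hfinal
    _ = ‖w‖ := Real.sqrt_sq (norm_nonneg w)
    _ ≤ 32 * ε^2 := hwn
    _ ≤ 40 * ε^2 := by nlinarith [sq_nonneg ε]

lemma tsum_swap_offdiag (M : ℕ × ℕ → ℝ) :
    ∑' p : {p : ℕ × ℕ // p ≠ (0, 0)}, (M (p.1.2, p.1.1)) ^ 2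
      = ∑' p : {p : ℕ × ℕ // p ≠ (0, 0)}, (M p.1) ^ 2 := by
  set G : ℕ × ℕ → ℝ := fun p => if p = (0, 0) then 0 else (M p) ^ 2 with hG
  set G' : ℕ × ℕ → ℝ := fun p => if p = (0, 0) then 0 else (M (p.2, p.1)) ^ 2 with hG'
  have hsupp : Function.support G ⊆ {p : ℕ × ℕ | p ≠ (0, 0)} := by
    intro p hp
    simp only [Function.mem_support] at hp
    intro hc; apply hp; rw [hG]; simp [hc]
  have hsupp' : Function.support G' ⊆ {p : ℕ × ℕ | p ≠ (0, 0)} := by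
    intro p hp
    simp only [Function.mem_support] at hp
    intro hc; apply hp; rw [hG']; simp [hc]
  have h1 : ∑' p : {p : ℕ × ℕ // p ≠ (0, 0)}, (M p.1) ^ 2 = ∑' p : ℕ × ℕ, G p := by
    rw [← tsum_subtype_eq_of_support_subset hsupp]
    exact tsum_congr fun b => by rw [hG]; dsimp only; rw [if_neg b.2]
  have h2 : ∑' p : {p : ℕ × ℕ // p ≠ (0, 0)}, (M (p.1.2, p.1.1)) ^ 2 = ∑' p : ℕ × ℕ, G' p := by
    rw [← tsum_subtype_eq_of_support_subset hsupp']
    exact tsum_congr fun b => by rw [hG']; dsimp only; rw [if_neg b.2]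
  have h3 : G' = G ∘ (Equiv.prodComm ℕ ℕ) := by
    funext p
    rw [hG', hG]
    simp only [Function.comp_apply, Equiv.prodComm_apply, Prod.swap]
    by_cases hp : p = ((0:ℕ), (0:ℕ))
    · subst hp
      simp
    · have h5 : ¬ ((p.2, p.1) = ((0:ℕ), (0:ℕ))) := by
        intro hc
        exact hp (Prod.ext_iff.2 ⟨(Prod.ext_iff.1 hc).2, (Prod.ext_iff.1 hc).1⟩)
      simp [hp, h5]
  rw [h1, h2, h3]
  exact Equiv.tsum_eq (Equiv.prodComm ℕ ℕ) G

/-- Let `M` be a Hilbert-Schmidt matrix (identified with the bounded operator `Mop` on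
`V = ℓ²(ℕ)`) with `M₀₀ = 1` and off-`(0,0)` Hilbert-Schmidt norm at most `ε ≤ 1/4`. With
`l_x = M_{x0}`, `r_x = M_{0x}` (`x ≥ 1`), `B = |l⟩⟨e₀| − |e₀⟩⟨r|`, `G = exp B`, the
conjugated matrix `M̃ = G⁻¹ M G` satisfies `(∑_{x≥1} M̃₀ₓ²)^{1/2} ≤ C ε²` and
`(∑_{x≥1} M̃ₓ₀²)^{1/2} ≤ C ε²` for an absolute constant `C`. -/
theorem stmt9 : ∃ C : ℝ, 0 < C ∧
    ∀ (M : ℕ × ℕ → ℝ) (ε : ℝ) (Mop : V →L[ℝ] V) (l r : V),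
      Summable (fun p : ℕ × ℕ => (M p) ^ 2) →
      M (0, 0) = 1 →
      Real.sqrt (∑' p : {p : ℕ × ℕ // p ≠ (0, 0)}, (M p.1) ^ 2) ≤ ε →
      ε ≤ 1 / 4 →
      (∀ i j : ℕ, (inner ℝ (e i) (Mop (e j)) : ℝ) = M (i, j)) →
      (∀ x : ℕ, l x = if x = 0 then 0 else M (x, 0)) →
      (∀ x : ℕ, r x = if x = 0 then 0 else M (0, x)) →
      ∀ B Mt : V →L[ℝ] V,
        B = (innerSL ℝ (e 0)).smulRight l - (innerSL ℝ r).smulRight (e 0) →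
        Mt = (exp (-B)).comp (Mop.comp (exp B)) →
        Real.sqrt (∑' x : {x : ℕ // x ≠ 0}, (inner ℝ (e 0) (Mt (e x.1)) : ℝ) ^ 2) ≤ C * ε ^ 2 ∧
        Real.sqrt (∑' x : {x : ℕ // x ≠ 0}, (inner ℝ (e x.1) (Mt (e 0)) : ℝ) ^ 2) ≤ C * ε ^ 2 := by
  refine ⟨40, by norm_num, ?_⟩
  intro M ε Mop l r hMsum hM00 hsqrt hε hent hl hr B Mt hB hMt
  constructor
  · -- row estimate via adjoint symmetry
    set B' : V →L[ℝ] V := (innerSL ℝ (e 0)).smulRight r - (innerSL ℝ l).smulRight (e 0) with hB'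
    have hM'sum : Summable (fun p : ℕ × ℕ => (M (p.2, p.1)) ^ 2) :=
      (Equiv.prodComm ℕ ℕ).summable_iff.2 hMsum
    have hsqrt' : Real.sqrt (∑' p : {p : ℕ × ℕ // p ≠ (0, 0)}, (M (p.1.2, p.1.1)) ^ 2) ≤ ε := by
      rw [tsum_swap_offdiag]; exact hsqrt
    have hent' : ∀ i j : ℕ,
        (inner ℝ (e i) ((ContinuousLinearMap.adjoint Mop) (e j)) : ℝ) = M (j, i) := by
      intro i j
      rw [real_inner_comm, ContinuousLinearMap.adjoint_inner_left, hent]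
    have hcore := core (fun p => M (p.2, p.1)) ε (ContinuousLinearMap.adjoint Mop) r l
      hM'sum hM00 hsqrt' hε hent' hr hl B' hB'
    -- identify the operator with the adjoint of Mt
    have hBstar : B' = star (-B) := by
      rw [ContinuousLinearMap.star_eq_adjoint, ContinuousLinearMap.eq_adjoint_iff]
      intro x y
      rw [hB', hB]
      simp only [ContinuousLinearMap.sub_apply, ContinuousLinearMap.smulRight_apply,
        ContinuousLinearMap.neg_apply, innerSL_apply_apply, inner_sub_left, inner_sub_right,
        inner_neg_right, real_inner_smul_left, real_inner_smul_right]
      rw [real_inner_comm x l, real_inner_comm x (e 0)]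
      ring
    have hB'neg : -B' = star B := by
      rw [hBstar]; simp
    have hMt' : (exp (-B')).comp ((ContinuousLinearMap.adjoint Mop).comp (exp B'))
        = ContinuousLinearMap.adjoint Mt := by
      rw [← ContinuousLinearMap.star_eq_adjoint, ← ContinuousLinearMap.star_eq_adjoint, hMt]
      rw [hB'neg, hBstar, ← star_exp, ← star_exp]
      have hc : ∀ X Y : V →L[ℝ] V, X.comp Y = X * Y := fun _ _ => rfl
      rw [hc, hc, hc, hc, star_mul, star_mul]
      rw [mul_assoc]
    rw [hMt'] at hcore
    have hsummand : ∀ x : {x : ℕ // x ≠ 0},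
        (inner ℝ (e 0) (Mt (e x.1)) : ℝ)
          = (inner ℝ (e x.1) ((ContinuousLinearMap.adjoint Mt) (e 0)) : ℝ) := by
      intro x
      have h9 : (inner ℝ ((ContinuousLinearMap.adjoint Mt) (e 0)) (e x.1) : ℝ)
          = inner ℝ (e 0) (Mt (e x.1)) :=
        ContinuousLinearMap.adjoint_inner_left Mt (e x.1) (e 0)
      rw [← h9, real_inner_comm]
    calc Real.sqrt (∑' x : {x : ℕ // x ≠ 0}, (inner ℝ (e 0) (Mt (e x.1)) : ℝ) ^ 2)
        = Real.sqrt (∑' x : {x : ℕ // x ≠ 0},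
            (inner ℝ (e x.1) ((ContinuousLinearMap.adjoint Mt) (e 0)) : ℝ) ^ 2) := by
          congr 1
          exact tsum_congr fun b => by rw [hsummand b]
      _ ≤ 40 * ε ^ 2 := hcore
  · have hcore := core M ε Mop l r hMsum hM00 hsqrt hε hent hl hr B hB
    rw [← hMt] at hcore
    exact hcore
end
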